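/- Let K be an algebraically closed field of characteristic zero, d ≥ 1, and A = K⟨v1,…,vd⟩ the free associative K-algebra. If ⟪-,-⟫ is a mixed double Poisson algebra structure on A of weight λ = (λ1,…,λd) ∈ K^d, then for all 1≤i,j≤d and every c ∈ A one has DJac(v_i,v_j,c) = −((λ_i+λ_j)/2)·(v_j ⊗₁ ⟪v_i,c⟫) + ((λ_i−λ_j)/2)·(1 ⊗₁ (v_j ∗ ⟪v_i,c⟫)). -/

import Mathlib

open TensorProduct

noncomputable section

variable (K : Type*) [Field K]
variable (A : Type*) [Ring A] [Algebra K A]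

/-- Leibniz rules for a double-bracket-type operation. -/
def LeibnizRules (D : A ⊗[K] A →ₗ[K] A ⊗[K] A) : Prop :=
  (∀ a b c : A,
      D (a ⊗ₜ[K] (b * c)) =
        (b ⊗ₜ[K] (1 : A)) * D (a ⊗ₜ[K] c) + D (a ⊗ₜ[K] b) * ((1 : A) ⊗ₜ[K] c))
  ∧ (∀ a b c : A,
      D ((a * b) ⊗ₜ[K] c) =
        ((1 : A) ⊗ₜ[K] a) * D (b ⊗ₜ[K] c) + D (a ⊗ₜ[K] c) * (b ⊗ₜ[K] (1 : A)))

/-- The associated bracket `{a,b} = m(⟪a,b⟫)`. -/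
def br (D : A ⊗[K] A →ₗ[K] A ⊗[K] A) (a b : A) : A :=
  LinearMap.mul' K A (D (a ⊗ₜ[K] b))

/-- The K-span of commutators `[A,A]`. -/
def commutatorSpan : Submodule K A :=
  Submodule.span K {x : A | ∃ a b : A, x = a * b - b * a}

/-- The flip on `A ⊗ A`. -/
def flipT : A ⊗[K] A →ₗ[K] A ⊗[K] A := (TensorProduct.comm K A A).toLinearMap

/-- Swap of the last two tensor factors of `(A ⊗ A) ⊗ A`. -/
def swap23 : ((A ⊗[K] A) ⊗[K] A) →ₗ[K] ((A ⊗[K] A) ⊗[K] A) :=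
  (TensorProduct.assoc K A A A).symm.toLinearMap ∘ₗ
    (LinearMap.lTensor A (TensorProduct.comm K A A).toLinearMap) ∘ₗ
    (TensorProduct.assoc K A A A).toLinearMap

/-- `⟪a, -⟫_L` on double tensors: `b ⊗ c ↦ ⟪a,b⟫ ⊗ c`. -/
def dL (D : A ⊗[K] A →ₗ[K] A ⊗[K] A) (a : A) :
    A ⊗[K] A →ₗ[K] (A ⊗[K] A) ⊗[K] A :=
  LinearMap.rTensor A (D ∘ₗ TensorProduct.mk K A A a)

/-- `⟪a, -⟫_R` on double tensors: `b ⊗ c ↦ b ⊗ ⟪a,c⟫`. -/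
def dR (D : A ⊗[K] A →ₗ[K] A ⊗[K] A) (a : A) :
    A ⊗[K] A →ₗ[K] (A ⊗[K] A) ⊗[K] A :=
  (TensorProduct.assoc K A A A).symm.toLinearMap ∘ₗ
    LinearMap.lTensor A (D ∘ₗ TensorProduct.mk K A A a)

/-- `⟪-, c⟫_L` on double tensors: `b ⊗ b' ↦ ⟪b,c⟫' ⊗ b' ⊗ ⟪b,c⟫''`. -/
def dLfst (D : A ⊗[K] A →ₗ[K] A ⊗[K] A) (c : A) :
    A ⊗[K] A →ₗ[K] (A ⊗[K] A) ⊗[K] A :=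
  swap23 K A ∘ₗ LinearMap.rTensor A (D ∘ₗ (TensorProduct.mk K A A).flip c)

/-- The double Jacobiator. -/
def DJac (D : A ⊗[K] A →ₗ[K] A ⊗[K] A) (a b c : A) : (A ⊗[K] A) ⊗[K] A :=
  dL K A D a (D (b ⊗ₜ[K] c)) - dR K A D b (D (a ⊗ₜ[K] c)) - dLfst K A D c (D (a ⊗ₜ[K] b))

/-- `c ⊗₁ (-)` : `w' ⊗ w'' ↦ w' ⊗ c ⊗ w''`. -/
def otimes1 (c : A) : A ⊗[K] A →ₗ[K] (A ⊗[K] A) ⊗[K] A :=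
  LinearMap.rTensor A ((TensorProduct.mk K A A).flip c)

variable {ι : Type*}

/-- Mixed double algebra structure of weight `lam` with respect to the generators `v`. -/
def IsMixedDouble (v : ι → A) (lam : ι → K) (D : A ⊗[K] A →ₗ[K] A ⊗[K] A) : Prop :=
  LeibnizRules K A D ∧
  ∀ i j : ι,
    D (v i ⊗ₜ[K] v j) + flipT K A (D (v j ⊗ₜ[K] v i)) =
      ((lam i + lam j) / 2) • (v i ⊗ₜ[K] v j - v j ⊗ₜ[K] v i) +
      ((lam i - lam j) / 2) • ((1 : A) ⊗ₜ[K] (v i * v j) - (v j * v i) ⊗ₜ[K] (1 : A))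

/-- Mixed double Poisson algebra structure of weight `lam` w.r.t. the generators `v`. -/
def IsMixedDoublePoisson (v : ι → A) (lam : ι → K) (D : A ⊗[K] A →ₗ[K] A ⊗[K] A) : Prop :=
  IsMixedDouble K A v lam D ∧
  ∀ i j k : ι,
    DJac K A D (v i) (v j) (v k) =
      (-((lam i + lam j) / 2)) • otimes1 K A (v j) (D (v i ⊗ₜ[K] v k)) +
      ((lam i - lam j) / 2) •
        otimes1 K A (1 : A) (((1 : A) ⊗ₜ[K] v j) * D (v i ⊗ₜ[K] v k))

/-- Modified double Poisson bracket. -/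
def IsModifiedDoublePoisson (D : A ⊗[K] A →ₗ[K] A ⊗[K] A) : Prop :=
  LeibnizRules K A D ∧
  (∀ a b : A, br K A D a b + br K A D b a ∈ commutatorSpan K A) ∧
  (∀ a b c : A,
    br K A D a (br K A D b c) - br K A D b (br K A D a c) - br K A D (br K A D a b) c = 0)

end

noncomputable section AuxMDP
set_option synthInstance.maxHeartbeats 1000000
set_option maxHeartbeats 1000000

open TensorProduct

variable {K : Type*} [Field K] {A : Type*} [Ring A] [Algebra K A]

/-- `w ↦ (1 ⊗ w') ⊗ w''`. -/
def ins1 (K : Type*) [Field K] (A : Type*) [Ring A] [Algebra K A] :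
    A ⊗[K] A →ₗ[K] (A ⊗[K] A) ⊗[K] A :=
  (TensorProduct.assoc K A A A).symm.toLinearMap ∘ₗ TensorProduct.mk K A (A ⊗[K] A) 1

variable (D : A ⊗[K] A →ₗ[K] A ⊗[K] A)

lemma dL_tmul (a x y : A) : dL K A D a (x ⊗ₜ[K] y) = D (a ⊗ₜ[K] x) ⊗ₜ[K] y := rfl

lemma dR_tmul (a x y : A) :
    dR K A D a (x ⊗ₜ[K] y) = (TensorProduct.assoc K A A A).symm (x ⊗ₜ[K] D (a ⊗ₜ[K] y)) := rfl

lemma swap23_tmul (x y z : A) :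
    swap23 K A ((x ⊗ₜ[K] y) ⊗ₜ[K] z) = (x ⊗ₜ[K] z) ⊗ₜ[K] y := by simp [swap23]

lemma dLfst_tmul (c x y : A) :
    dLfst K A D c (x ⊗ₜ[K] y) = swap23 K A (D (x ⊗ₜ[K] c) ⊗ₜ[K] y) := rfl

lemma otimes1_tmul (c x y : A) :
    otimes1 K A c (x ⊗ₜ[K] y) = (x ⊗ₜ[K] c) ⊗ₜ[K] y := rfl

lemma ins1_tmul (x y : A) :
    ins1 K A (x ⊗ₜ[K] y) = ((1 : A) ⊗ₜ[K] x) ⊗ₜ[K] y := rfl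

lemma D_tmul_one (hL : LeibnizRules K A D) (a : A) : D (a ⊗ₜ[K] (1 : A)) = 0 := by
  have h := hL.1 a 1 1
  rw [one_mul, ← Algebra.TensorProduct.one_def, one_mul, mul_one, left_eq_add] at h
  exact h

-- pure-tensor multiplication helpers
lemma assocsymm_mulleft (c x : A) (z : A ⊗[K] A) :
    (TensorProduct.assoc K A A A).symm ((c * x) ⊗ₜ[K] z) =
      ((c ⊗ₜ[K] (1 : A)) ⊗ₜ[K] (1 : A)) * (TensorProduct.assoc K A A A).symm (x ⊗ₜ[K] z) := by
  induction z using TensorProduct.induction_on with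
  | zero => simp
  | tmul r s => simp [Algebra.TensorProduct.tmul_mul_tmul]
  | add z₁ z₂ h₁ h₂ => rw [tmul_add, map_add, h₁, h₂, tmul_add, map_add, mul_add]

lemma assocsymm_ymul (x y : A) (z : A ⊗[K] A) :
    (TensorProduct.assoc K A A A).symm (x ⊗ₜ[K] ((y ⊗ₜ[K] (1 : A)) * z)) =
      ((x ⊗ₜ[K] y) ⊗ₜ[K] (1 : A)) * ins1 K A z := by
  induction z using TensorProduct.induction_on with
  | zero => simp
  | tmul r s => simp [Algebra.TensorProduct.tmul_mul_tmul, ins1_tmul]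
  | add z₁ z₂ h₁ h₂ => rw [mul_add, tmul_add, map_add, h₁, h₂, map_add, mul_add]

lemma assocsymm_mulright (x c' : A) (z : A ⊗[K] A) :
    (TensorProduct.assoc K A A A).symm (x ⊗ₜ[K] (z * ((1 : A) ⊗ₜ[K] c'))) =
      (TensorProduct.assoc K A A A).symm (x ⊗ₜ[K] z) * (((1 : A) ⊗ₜ[K] (1 : A)) ⊗ₜ[K] c') := by
  induction z using TensorProduct.induction_on with
  | zero => simp
  | tmul r s => simp [Algebra.TensorProduct.tmul_mul_tmul]
  | add z₁ z₂ h₁ h₂ => rw [add_mul, tmul_add, map_add, h₁, h₂, tmul_add, map_add, add_mul]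

lemma swap23_mulleft (c : A) (z : A ⊗[K] A) (q : A) :
    swap23 K A (((c ⊗ₜ[K] (1 : A)) * z) ⊗ₜ[K] q) =
      ((c ⊗ₜ[K] (1 : A)) ⊗ₜ[K] (1 : A)) * swap23 K A (z ⊗ₜ[K] q) := by
  induction z using TensorProduct.induction_on with
  | zero => simp
  | tmul r s => simp [Algebra.TensorProduct.tmul_mul_tmul, swap23_tmul]
  | add z₁ z₂ h₁ h₂ => rw [mul_add, add_tmul, map_add, h₁, h₂, add_tmul, map_add, mul_add]

lemma swap23_mulright (c' : A) (z : A ⊗[K] A) (q : A) :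
    swap23 K A ((z * ((1 : A) ⊗ₜ[K] c')) ⊗ₜ[K] q) =
      swap23 K A (z ⊗ₜ[K] q) * (((1 : A) ⊗ₜ[K] (1 : A)) ⊗ₜ[K] c') := by
  induction z using TensorProduct.induction_on with
  | zero => simp
  | tmul r s => simp [Algebra.TensorProduct.tmul_mul_tmul, swap23_tmul]
  | add z₁ z₂ h₁ h₂ => rw [add_mul, add_tmul, map_add, h₁, h₂, add_tmul, map_add, add_mul]

lemma otimes1_mulleft (x c : A) (w : A ⊗[K] A) :
    otimes1 K A x ((c ⊗ₜ[K] (1 : A)) * w) =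
      ((c ⊗ₜ[K] (1 : A)) ⊗ₜ[K] (1 : A)) * otimes1 K A x w := by
  induction w using TensorProduct.induction_on with
  | zero => simp
  | tmul p q => simp [Algebra.TensorProduct.tmul_mul_tmul, otimes1_tmul]
  | add w₁ w₂ h₁ h₂ => rw [mul_add, map_add, h₁, h₂, map_add, mul_add]

lemma otimes1_mulright (x c' : A) (w : A ⊗[K] A) :
    otimes1 K A x (w * ((1 : A) ⊗ₜ[K] c')) =
      otimes1 K A x w * (((1 : A) ⊗ₜ[K] (1 : A)) ⊗ₜ[K] c') := by
  induction w using TensorProduct.induction_on with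
  | zero => simp
  | tmul p q => simp [Algebra.TensorProduct.tmul_mul_tmul, otimes1_tmul]
  | add w₁ w₂ h₁ h₂ => rw [add_mul, map_add, h₁, h₂, map_add, add_mul]

-- expansion lemmas using the Leibniz rules
lemma dL_mulleft (hL : LeibnizRules K A D) (a c : A) (w : A ⊗[K] A) :
    dL K A D a ((c ⊗ₜ[K] (1 : A)) * w) =
      ((c ⊗ₜ[K] (1 : A)) ⊗ₜ[K] (1 : A)) * dL K A D a w +
        (D (a ⊗ₜ[K] c) ⊗ₜ[K] (1 : A)) * ins1 K A w := by
  induction w using TensorProduct.induction_on with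
  | zero => simp
  | tmul x y =>
      rw [Algebra.TensorProduct.tmul_mul_tmul, one_mul, dL_tmul, hL.1 a c x, add_tmul,
        dL_tmul, ins1_tmul, Algebra.TensorProduct.tmul_mul_tmul,
        Algebra.TensorProduct.tmul_mul_tmul, one_mul]
  | add w₁ w₂ h₁ h₂ =>
      rw [mul_add, map_add, h₁, h₂, map_add, map_add, mul_add, mul_add]
      abel

lemma dL_mulright (a c' : A) (w : A ⊗[K] A) :
    dL K A D a (w * ((1 : A) ⊗ₜ[K] c')) =
      dL K A D a w * (((1 : A) ⊗ₜ[K] (1 : A)) ⊗ₜ[K] c') := by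
  induction w using TensorProduct.induction_on with
  | zero => simp
  | tmul x y =>
      rw [Algebra.TensorProduct.tmul_mul_tmul, mul_one, dL_tmul, dL_tmul,
        Algebra.TensorProduct.tmul_mul_tmul, ← Algebra.TensorProduct.one_def, mul_one]
  | add w₁ w₂ h₁ h₂ => rw [add_mul, map_add, h₁, h₂, map_add, add_mul]

lemma dR_mulleft (b c : A) (w : A ⊗[K] A) :
    dR K A D b ((c ⊗ₜ[K] (1 : A)) * w) =
      ((c ⊗ₜ[K] (1 : A)) ⊗ₜ[K] (1 : A)) * dR K A D b w := by
  induction w using TensorProduct.induction_on with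
  | zero => simp
  | tmul x y =>
      rw [Algebra.TensorProduct.tmul_mul_tmul, one_mul, dR_tmul, dR_tmul, assocsymm_mulleft]
  | add w₁ w₂ h₁ h₂ => rw [mul_add, map_add, h₁, h₂, map_add, mul_add]

lemma dR_mulright (hL : LeibnizRules K A D) (b c' : A) (w : A ⊗[K] A) :
    dR K A D b (w * ((1 : A) ⊗ₜ[K] c')) =
      (w ⊗ₜ[K] (1 : A)) * ins1 K A (D (b ⊗ₜ[K] c')) +
        dR K A D b w * (((1 : A) ⊗ₜ[K] (1 : A)) ⊗ₜ[K] c') := by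
  induction w using TensorProduct.induction_on with
  | zero => simp
  | tmul x y =>
      rw [Algebra.TensorProduct.tmul_mul_tmul, mul_one, dR_tmul, hL.1 b y c', tmul_add,
        map_add, assocsymm_ymul, assocsymm_mulright, dR_tmul]
  | add w₁ w₂ h₁ h₂ =>
      rw [add_mul, map_add, h₁, h₂, map_add, add_mul, add_tmul, add_mul]
      abel

lemma dLfst_mul (hL : LeibnizRules K A D) (c c' : A) (u : A ⊗[K] A) :
    dLfst K A D (c * c') u =
      ((c ⊗ₜ[K] (1 : A)) ⊗ₜ[K] (1 : A)) * dLfst K A D c' u +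
        dLfst K A D c u * (((1 : A) ⊗ₜ[K] (1 : A)) ⊗ₜ[K] c') := by
  induction u using TensorProduct.induction_on with
  | zero => simp
  | tmul p q =>
      rw [dLfst_tmul, hL.1 p c c', add_tmul, map_add, swap23_mulleft, swap23_mulright,
        dLfst_tmul, dLfst_tmul]
  | add u₁ u₂ h₁ h₂ =>
      rw [map_add, h₁, h₂, map_add, map_add, mul_add, add_mul]
      abel

lemma dLfst_add_c (c c' : A) (u : A ⊗[K] A) :
    dLfst K A D (c + c') u = dLfst K A D c u + dLfst K A D c' u := by
  induction u using TensorProduct.induction_on with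
  | zero => simp
  | tmul p q => rw [dLfst_tmul, tmul_add, map_add, add_tmul, map_add, dLfst_tmul, dLfst_tmul]
  | add u₁ u₂ h₁ h₂ =>
      rw [map_add, h₁, h₂, map_add, map_add]
      abel

lemma dLfst_smul_c (r : K) (c : A) (u : A ⊗[K] A) :
    dLfst K A D (r • c) u = r • dLfst K A D c u := by
  induction u using TensorProduct.induction_on with
  | zero => simp
  | tmul p q => rw [dLfst_tmul, tmul_smul, map_smul, ← smul_tmul', map_smul, dLfst_tmul]
  | add u₁ u₂ h₁ h₂ => rw [map_add, h₁, h₂, map_add, smul_add]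

lemma dLfst_one (hL : LeibnizRules K A D) (u : A ⊗[K] A) :
    dLfst K A D 1 u = 0 := by
  induction u using TensorProduct.induction_on with
  | zero => simp
  | tmul p q => rw [dLfst_tmul, D_tmul_one D hL, zero_tmul, map_zero]
  | add u₁ u₂ h₁ h₂ => rw [map_add, h₁, h₂, add_zero]

lemma DJac_one (hL : LeibnizRules K A D) (a b : A) : DJac K A D a b 1 = 0 := by
  rw [DJac, D_tmul_one D hL, D_tmul_one D hL, map_zero, map_zero, dLfst_one D hL]
  simp

lemma DJac_add_c (a b c c' : A) :
    DJac K A D a b (c + c') = DJac K A D a b c + DJac K A D a b c' := by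
  rw [DJac, DJac, DJac, tmul_add, map_add, map_add, tmul_add, map_add, map_add,
    dLfst_add_c]
  abel

lemma DJac_smul_c (a b : A) (r : K) (c : A) :
    DJac K A D a b (r • c) = r • DJac K A D a b c := by
  rw [DJac, DJac, tmul_smul, map_smul, map_smul, tmul_smul, map_smul, map_smul,
    dLfst_smul_c]
  rw [smul_sub, smul_sub]

lemma DJac_mul_c (hL : LeibnizRules K A D) (a b c c' : A) :
    DJac K A D a b (c * c') =
      ((c ⊗ₜ[K] (1 : A)) ⊗ₜ[K] (1 : A)) * DJac K A D a b c' +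
        DJac K A D a b c * (((1 : A) ⊗ₜ[K] (1 : A)) ⊗ₜ[K] c') := by
  rw [DJac, hL.1 b c c', map_add, dL_mulleft D hL, dL_mulright,
    hL.1 a c c', map_add, dR_mulleft, dR_mulright D hL, dLfst_mul D hL,
    DJac, DJac]
  rw [mul_sub, mul_sub, sub_mul, sub_mul]
  abel

end AuxMDP


theorem stmt7 {K : Type*} [Field K] [IsAlgClosed K] [CharZero K]
    {d : ℕ} (hd : 1 ≤ d) (lam : Fin d → K)
    (D : FreeAlgebra K (Fin d) ⊗[K] FreeAlgebra K (Fin d) →ₗ[K] FreeAlgebra K (Fin d) ⊗[K] FreeAlgebra K (Fin d))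
    (hD : IsMixedDoublePoisson K (FreeAlgebra K (Fin d)) (FreeAlgebra.ι K) lam D) :
    ∀ (i j : Fin d) (c : FreeAlgebra K (Fin d)),
      DJac K (FreeAlgebra K (Fin d)) D (FreeAlgebra.ι K i) (FreeAlgebra.ι K j) c =
        (-((lam i + lam j) / 2)) •
            otimes1 K (FreeAlgebra K (Fin d)) (FreeAlgebra.ι K j) (D (FreeAlgebra.ι K i ⊗ₜ[K] c)) +
        ((lam i - lam j) / 2) •
            otimes1 K (FreeAlgebra K (Fin d)) (1 : FreeAlgebra K (Fin d))
              (((1 : FreeAlgebra K (Fin d)) ⊗ₜ[K] FreeAlgebra.ι K j) *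
                D (FreeAlgebra.ι K i ⊗ₜ[K] c)) := by
  obtain ⟨⟨hL, _hskew⟩, hJ⟩ := hD
  intro i j c
  induction c using FreeAlgebra.induction with
  | grade1 k => exact hJ i j k
  | grade0 r =>
      rw [Algebra.algebraMap_eq_smul_one, DJac_smul_c, DJac_one D hL, smul_zero, tmul_smul,
        map_smul, D_tmul_one D hL, smul_zero]
      simp
  | add x y hx hy =>
      rw [DJac_add_c, hx, hy]
      simp only [tmul_add, map_add, mul_add, smul_add]
      abel
  | mul x y hx hy =>
      have hcomm : ((1 : FreeAlgebra K (Fin d)) ⊗ₜ[K] FreeAlgebra.ι K j) *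
            (x ⊗ₜ[K] (1 : FreeAlgebra K (Fin d))) =
          (x ⊗ₜ[K] (1 : FreeAlgebra K (Fin d))) *
            ((1 : FreeAlgebra K (Fin d)) ⊗ₜ[K] FreeAlgebra.ι K j) := by
        rw [Algebra.TensorProduct.tmul_mul_tmul, Algebra.TensorProduct.tmul_mul_tmul,
          one_mul, mul_one, one_mul, mul_one]
      have h2 : ((1 : FreeAlgebra K (Fin d)) ⊗ₜ[K] FreeAlgebra.ι K j) *
            D (FreeAlgebra.ι K i ⊗ₜ[K] (x * y)) =
          (x ⊗ₜ[K] (1 : FreeAlgebra K (Fin d))) *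
              (((1 : FreeAlgebra K (Fin d)) ⊗ₜ[K] FreeAlgebra.ι K j) *
                D (FreeAlgebra.ι K i ⊗ₜ[K] y)) +
            (((1 : FreeAlgebra K (Fin d)) ⊗ₜ[K] FreeAlgebra.ι K j) *
                D (FreeAlgebra.ι K i ⊗ₜ[K] x)) *
              ((1 : FreeAlgebra K (Fin d)) ⊗ₜ[K] y) := by
        rw [hL.1 _ x y, mul_add, ← mul_assoc, ← mul_assoc, hcomm, mul_assoc]
      rw [DJac_mul_c D hL, hx, hy, h2, hL.1 _ x y]
      simp only [map_add, otimes1_mulleft, otimes1_mulright]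
      simp only [mul_add, add_mul, mul_smul_comm, smul_mul_assoc, smul_add]
      abel
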